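/- arXiv:1601.01488 — 3 statements merged into one kernel-verified Lean document; each statement's English description precedes it below -/
import Mathlib

section
/- Let Q be a positive definite real L×L matrix and define r(a) = aᵀ Q a for a ∈ ℤ^L \ {0}. Suppose a_1, …, a_L ∈ ℤ^L are chosen greedily: a_k minimizes r(a) over nonzero integer vectors a linearly independent of {a_1,…,a_{k−1}} (over ℝ). Then the greedy choice achieves the optimal minimax value: max_{1≤k≤L} r(a_k) = min over all linearly independent families {d_1,…,d_L} ⊆ ℤ^L \ {0} of max_{1≤j≤L} r(d_j). -/
open Matrix

/-- The quadratic form `r(a) = aᵀ Q a` evaluated on an integer vector. -/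
def intQuadForm {L : ℕ} (Q : Matrix (Fin L) (Fin L) ℝ) (a : Fin L → ℤ) : ℝ :=
  (fun i => (a i : ℝ)) ⬝ᵥ Q.mulVec (fun i => (a i : ℝ))

theorem stmt_12 (L : ℕ) [NeZero L] (Q : Matrix (Fin L) (Fin L) ℝ) (hQ : Q.PosDef)
    (a : Fin L → Fin L → ℤ)
    (ha0 : ∀ k, a k ≠ 0)
    (haInd : LinearIndependent ℝ (fun k => (fun i => ((a k i : ℝ)))))
    (hGreedy : ∀ k : Fin L, ∀ b : Fin L → ℤ, b ≠ 0 →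
      (fun i => (b i : ℝ)) ∉
        Submodule.span ℝ ((fun j : Fin L => (fun i => ((a j i : ℝ)))) '' {j | j < k}) →
      intQuadForm Q (a k) ≤ intQuadForm Q b) :
    IsLeast
      {x : ℝ | ∃ d : Fin L → Fin L → ℤ,
        (∀ j, d j ≠ 0) ∧
        LinearIndependent ℝ (fun j => (fun i => ((d j i : ℝ)))) ∧
        x = Finset.univ.sup' Finset.univ_nonempty (fun j => intQuadForm Q (d j))}
      (Finset.univ.sup' Finset.univ_nonempty (fun k => intQuadForm Q (a k))) := by
  constructor
  · exact ⟨a, ha0, haInd, rfl⟩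
  · rintro x ⟨d, hd0, hdInd, rfl⟩
    apply Finset.sup'_le
    intro k _
    -- find j with (d j : ℝ) not in span of {a_j : j < k}
    set f : Fin L → Fin L → ℝ := fun j : Fin L => (fun i => ((a j i : ℝ))) with hf
    set S : Submodule ℝ (Fin L → ℝ) := Submodule.span ℝ (f '' {j | j < k}) with hS
    have hex : ∃ j : Fin L, (fun i => ((d j i : ℝ))) ∉ S := by
      by_contra h
      push_neg at h
      have hle : Submodule.span ℝ (Set.range fun j : Fin L => (fun i => ((d j i : ℝ)))) ≤ S := by
        rw [Submodule.span_le]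
        rintro _ ⟨j, rfl⟩
        exact h j
      have h1 : Module.finrank ℝ (Submodule.span ℝ
          (Set.range fun j : Fin L => (fun i => ((d j i : ℝ))))) = L := by
        rw [finrank_span_eq_card hdInd, Fintype.card_fin]
      have himg : f '' {j | j < k} = ((Finset.Iio k).image f : Finset (Fin L → ℝ)) := by
        ext v
        simp [Set.mem_image, Finset.mem_image]
      have h2 : Module.finrank ℝ S ≤ (k : ℕ) := by
        rw [hS, himg]
        calc Module.finrank ℝ (Submodule.span ℝ ((Finset.Iio k).image f : Set (Fin L → ℝ)))
            ≤ ((Finset.Iio k).image f).card := finrank_span_finset_le_card _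
          _ ≤ (Finset.Iio k).card := Finset.card_image_le
          _ = (k : ℕ) := by simp
      have h3 : L ≤ (k : ℕ) := by
        calc L = _ := h1.symm
          _ ≤ Module.finrank ℝ S := Submodule.finrank_mono hle
          _ ≤ (k : ℕ) := h2
      exact absurd h3 (not_le.mpr k.isLt)
    obtain ⟨j, hj⟩ := hex
    have := hGreedy k (d j) (hd0 j) hj
    exact this.trans (Finset.le_sup' (fun j => intQuadForm Q (d j)) (Finset.mem_univ j))
end

section
/- Let G be a real L×N matrix, A a real L×(k−1) matrix with linearly independent columns, F = I_L − A(AᵀA)⁻¹Aᵀ, and G̃ = F G. For a ∈ ℝ^L, the choices b* = (I_N + G̃ᵀ G̃)⁻¹ G̃ᵀ a and β* = (AᵀA)⁻¹ Aᵀ (I_L − G (I_N + G̃ᵀG̃)⁻¹ G̃ᵀ) a minimize f(b, β) = ‖b‖² + ‖G b + A β − a‖² over (b, β) ∈ ℝ^N × ℝ^{k−1}. -/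
open Matrix

set_option maxHeartbeats 1000000

theorem stmt_14 (L N n : ℕ) (G : Matrix (Fin L) (Fin N) ℝ)
    (A : Matrix (Fin L) (Fin n) ℝ)
    (hA : LinearIndependent ℝ (fun j : Fin n => Aᵀ j))
    (a : Fin L → ℝ) :
    let F : Matrix (Fin L) (Fin L) ℝ := 1 - A * (Aᵀ * A)⁻¹ * Aᵀ
    let Gt : Matrix (Fin L) (Fin N) ℝ := F * G
    let bstar : Fin N → ℝ := ((1 + Gtᵀ * Gt)⁻¹).mulVec (Gtᵀ.mulVec a)
    let βstar : Fin n → ℝ :=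
      ((Aᵀ * A)⁻¹ * Aᵀ * (1 - G * (1 + Gtᵀ * Gt)⁻¹ * Gtᵀ)).mulVec a
    ∀ (b : Fin N → ℝ) (β : Fin n → ℝ),
      (∑ i, bstar i ^ 2) + (∑ i, (G.mulVec bstar i + A.mulVec βstar i - a i) ^ 2) ≤
        (∑ i, b i ^ 2) + (∑ i, (G.mulVec b i + A.mulVec β i - a i) ^ 2) := by
  intro F Gt bstar βstar b β
  have hF : F = 1 - A * (Aᵀ * A)⁻¹ * Aᵀ := rfl
  have hGt : Gt = F * G := rfl
  have hbstar : bstar = (1 + Gtᵀ * Gt)⁻¹ *ᵥ (Gtᵀ *ᵥ a) := rfl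
  have hβstar : βstar = ((Aᵀ * A)⁻¹ * Aᵀ * (1 - G * (1 + Gtᵀ * Gt)⁻¹ * Gtᵀ)) *ᵥ a := rfl
  clear_value F Gt bstar βstar
  -- Aᵀ * A is positive definite
  have hAA : (Aᵀ * A).PosDef := by
    refine posDef_iff_dotProduct_mulVec.mpr ⟨?_, fun x hx => ?_⟩
    · have : (Aᵀ * A)ᴴ = Aᵀ * A := by
        simp [conjTranspose_eq_transpose_of_trivial, transpose_mul]
      exact this
    · have hAx : A *ᵥ x ≠ 0 := by
        intro h0
        apply hx
        have hz := Fintype.linearIndependent_iff.mp hA x ?_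
        · funext j; exact hz j
        · funext i
          have := congrFun h0 i
          simpa [mulVec, dotProduct, mul_comm, Finset.sum_apply] using this
      have hrw : star x ⬝ᵥ (Aᵀ * A) *ᵥ x = (A *ᵥ x) ⬝ᵥ (A *ᵥ x) := by
        rw [← mulVec_mulVec, dotProduct_mulVec]
        simp [vecMul_transpose, star_trivial]
      rw [hrw]
      have hne : (A *ᵥ x) ⬝ᵥ (A *ᵥ x) ≠ 0 := by
        simpa [dotProduct_self_eq_zero] using hAx
      have hnn : 0 ≤ (A *ᵥ x) ⬝ᵥ (A *ᵥ x) :=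
        Finset.sum_nonneg fun i _ => mul_self_nonneg _
      exact lt_of_le_of_ne hnn (Ne.symm hne)
  have hdetAA : IsUnit (Aᵀ * A).det := (isUnit_iff_isUnit_det _).mp hAA.isUnit
  have hAA1 : (Aᵀ * A) * (Aᵀ * A)⁻¹ = 1 := mul_nonsing_inv _ hdetAA
  -- 1 + Gtᵀ * Gt is positive definite
  have hS : (1 + Gtᵀ * Gt).PosDef := by
    have h1 := posSemidef_conjTranspose_mul_self (R := ℝ) Gt
    rw [conjTranspose_eq_transpose_of_trivial] at h1
    exact Matrix.PosDef.one.add_posSemidef h1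
  have hdetS : IsUnit (1 + Gtᵀ * Gt).det := (isUnit_iff_isUnit_det _).mp hS.isUnit
  have hS1 : (1 + Gtᵀ * Gt) * (1 + Gtᵀ * Gt)⁻¹ = 1 := mul_nonsing_inv _ hdetS
  set M : Matrix (Fin N) (Fin N) ℝ := (1 + Gtᵀ * Gt)⁻¹ with hM
  set Ht : Matrix (Fin N) (Fin L) ℝ := Gtᵀ with hHt
  clear_value M Ht
  -- basic identities
  have hAF : Aᵀ * F = 0 := by
    rw [hF, Matrix.mul_sub, Matrix.mul_one]
    simp only [← Matrix.mul_assoc]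
    rw [hAA1, Matrix.one_mul, sub_self]
  have hsymm : (Aᵀ * A)ᵀ = Aᵀ * A := by rw [transpose_mul, transpose_transpose]
  have hFt : Fᵀ = F := by
    rw [hF, transpose_sub, transpose_one, transpose_mul, transpose_mul,
      transpose_transpose, transpose_nonsing_inv, hsymm]
    simp only [Matrix.mul_assoc]
  have hFA : F * A = 0 := by
    have h := congrArg Matrix.transpose hAF
    simpa [transpose_mul, transpose_transpose, hFt] using h
  have hFF : F * F = F := by
    nth_rewrite 2 [hF]
    rw [Matrix.mul_sub, Matrix.mul_one]
    simp only [← Matrix.mul_assoc]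
    rw [hFA, Matrix.zero_mul, Matrix.zero_mul, sub_zero]
  have hAGt : Aᵀ * Gt = 0 := by rw [hGt, ← Matrix.mul_assoc, hAF, Matrix.zero_mul]
  have hGtF : Gᵀ * F = Ht := by rw [hHt, hGt, transpose_mul, hFt]
  have hFGt : F * Gt = Gt := by rw [hGt, ← Matrix.mul_assoc, hFF]
  have hGG : Gᵀ * Gt = Ht * Gt := by
    rw [← hGtF, Matrix.mul_assoc, hFGt]
  set r : Fin L → ℝ := G.mulVec bstar + A.mulVec βstar - a with hrdef
  have hr : r = (Gt * M * Ht - F) *ᵥ a := by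
    rw [hrdef]
    have hb1 : G.mulVec bstar = (G * M * Ht) *ᵥ a := by
      rw [hbstar, mulVec_mulVec, mulVec_mulVec, Matrix.mul_assoc]
    have hb2 : A.mulVec βstar = (A * ((Aᵀ * A)⁻¹ * Aᵀ * (1 - G * M * Ht))) *ᵥ a := by
      rw [hβstar, mulVec_mulVec]
    rw [hb1, hb2]
    nth_rewrite 3 [show a = (1 : Matrix (Fin L) (Fin L) ℝ) *ᵥ a from (one_mulVec a).symm]
    rw [← add_mulVec, ← sub_mulVec]
    congr 1
    rw [hGt, hF]
    simp only [Matrix.mul_sub, Matrix.sub_mul, Matrix.mul_one, Matrix.one_mul,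
      ← Matrix.mul_assoc]
    abel
  have hmat1 : Aᵀ * (Gt * M * Ht - F) = 0 := by
    rw [Matrix.mul_sub, hAF]
    simp only [← Matrix.mul_assoc]
    rw [hAGt, Matrix.zero_mul, Matrix.zero_mul, sub_zero]
  have hmat2 : M * Ht + Gᵀ * (Gt * M * Ht - F) = 0 := by
    rw [Matrix.mul_sub, hGtF]
    simp only [← Matrix.mul_assoc]
    rw [hGG]
    have h' : M * Ht + Ht * Gt * M * Ht = Ht := by
      calc M * Ht + Ht * Gt * M * Ht = (M + Ht * Gt * M) * Ht := by rw [Matrix.add_mul]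
        _ = ((1 + Ht * Gt) * M) * Ht := by rw [Matrix.add_mul 1 (Ht * Gt) M, Matrix.one_mul]
        _ = Ht := by rw [hS1, Matrix.one_mul]
    rw [show M * Ht + (Ht * Gt * M * Ht - Ht) = (M * Ht + Ht * Gt * M * Ht) - Ht by abel,
      h', sub_self]
  have h1 : Aᵀ *ᵥ r = 0 := by rw [hr, mulVec_mulVec, hmat1, zero_mulVec]
  have h2 : bstar + Gᵀ *ᵥ r = 0 := by
    have hbs : bstar = (M * Ht) *ᵥ a := by
      rw [hbstar, mulVec_mulVec]
    rw [hbs, hr, mulVec_mulVec, ← add_mulVec, hmat2, zero_mulVec]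
  -- quadratic expansion
  have swapG : ∀ (u : Fin N → ℝ), (Gᵀ *ᵥ r) ⬝ᵥ u = r ⬝ᵥ (G *ᵥ u) := fun u => by
    rw [mulVec_transpose, ← dotProduct_mulVec]
  have swapA : ∀ (u : Fin n → ℝ), (Aᵀ *ᵥ r) ⬝ᵥ u = r ⬝ᵥ (A *ᵥ u) := fun u => by
    rw [mulVec_transpose, ← dotProduct_mulVec]
  set db : Fin N → ℝ := b - bstar with hdb
  set dβ : Fin n → ℝ := β - βstar with hdβ
  have hb : b = bstar + db := by rw [hdb]; abel
  have hβ : β = βstar + dβ := by rw [hdβ]; abel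
  set wv : Fin L → ℝ := G *ᵥ db + A *ᵥ dβ with hwv
  have hrb : G *ᵥ b + A *ᵥ β - a = r + wv := by
    rw [hb, hβ, mulVec_add, mulVec_add, hwv, hrdef]; abel
  have cross : bstar ⬝ᵥ db + r ⬝ᵥ wv = 0 := by
    rw [hwv, dotProduct_add, ← swapG db, ← swapA dβ, ← add_assoc, ← add_dotProduct,
      h2, h1, zero_dotProduct, zero_dotProduct, add_zero]
  have e1 : ∑ i, bstar i ^ 2 = bstar ⬝ᵥ bstar := by simp [dotProduct, pow_two]
  have e2 : ∑ i, b i ^ 2 = b ⬝ᵥ b := by simp [dotProduct, pow_two]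
  have hgoal1 : ∑ i, (G.mulVec b i + A.mulVec β i - a i) ^ 2 = (r + wv) ⬝ᵥ (r + wv) := by
    rw [← hrb]; simp [dotProduct, pow_two]
  have hgoal0 : ∑ i, (G.mulVec bstar i + A.mulVec βstar i - a i) ^ 2 = r ⬝ᵥ r := by
    rw [hrdef]; simp [dotProduct, pow_two]
  rw [hgoal0, hgoal1, e1, e2, hb]
  have expand : (bstar + db) ⬝ᵥ (bstar + db) + (r + wv) ⬝ᵥ (r + wv)
      = bstar ⬝ᵥ bstar + r ⬝ᵥ r + (db ⬝ᵥ db + wv ⬝ᵥ wv)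
        + 2 * (bstar ⬝ᵥ db + r ⬝ᵥ wv) := by
    simp only [dotProduct_add, add_dotProduct]
    rw [dotProduct_comm db bstar, dotProduct_comm wv r]
    ring
  rw [expand, cross, mul_zero, add_zero]
  have hnn : 0 ≤ db ⬝ᵥ db + wv ⬝ᵥ wv :=
    add_nonneg (Finset.sum_nonneg fun i _ => mul_self_nonneg _)
      (Finset.sum_nonneg fun i _ => mul_self_nonneg _)
  linarith
end

section
/- Let G, A, F, G̃ be as in the successive computing scheme. Then the minimal value min_{b,β} (‖b‖² + ‖G b + A β − a‖²) equals aᵀ Q_k a, where Q_k = Fᵀ (I_L + G̃ G̃ᵀ)⁻¹ F. -/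
open Matrix

private lemma dotmv {m k : ℕ} (M : Matrix (Fin m) (Fin k) ℝ) (v : Fin k → ℝ) (w : Fin m → ℝ) :
    (M *ᵥ v) ⬝ᵥ w = v ⬝ᵥ (Mᵀ *ᵥ w) := by
  rw [mulVec_transpose, dotProduct_comm, dotProduct_mulVec, dotProduct_comm]

private lemma sumsq {m : ℕ} (v : Fin m → ℝ) : ∑ i, v i ^ 2 = v ⬝ᵥ v := by
  simp [dotProduct, sq]

private lemma dot_self_nonneg' {m : ℕ} (v : Fin m → ℝ) : 0 ≤ v ⬝ᵥ v :=
  Finset.sum_nonneg fun i _ => mul_self_nonneg _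

theorem stmt_15 (L N n : ℕ) (G : Matrix (Fin L) (Fin N) ℝ)
    (A : Matrix (Fin L) (Fin n) ℝ)
    (hA : LinearIndependent ℝ (fun j : Fin n => Aᵀ j))
    (a : Fin L → ℝ) :
    let F : Matrix (Fin L) (Fin L) ℝ := 1 - A * (Aᵀ * A)⁻¹ * Aᵀ
    let Gt : Matrix (Fin L) (Fin N) ℝ := F * G
    let Qk : Matrix (Fin L) (Fin L) ℝ := Fᵀ * (1 + Gt * Gtᵀ)⁻¹ * F
    IsLeast
      {y : ℝ | ∃ (b : Fin N → ℝ) (β : Fin n → ℝ),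
        y = (∑ i, b i ^ 2) + ∑ i, (G.mulVec b i + A.mulVec β i - a i) ^ 2}
      (a ⬝ᵥ Qk.mulVec a) := by
  intro F Gt Qk
  have hAinj : Function.Injective A.mulVec := Matrix.mulVec_injective_iff.mpr hA
  -- AᵀA is positive definite, hence invertible
  have hAtA : (Aᵀ * A).PosDef := by
    refine posDef_iff_dotProduct_mulVec.mpr ⟨by rw [IsHermitian, conjTranspose_eq_transpose_of_trivial, transpose_mul,
      transpose_transpose], fun x hx => ?_⟩
    have hx' : A *ᵥ x ≠ 0 := fun h => hx (hAinj (by simpa using h))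
    have he : star x ⬝ᵥ (Aᵀ * A) *ᵥ x = (A *ᵥ x) ⬝ᵥ (A *ᵥ x) := by
      rw [star_trivial, ← mulVec_mulVec, dotProduct_mulVec, vecMul_transpose]
    rw [he]
    exact lt_of_le_of_ne (dot_self_nonneg' _) fun h =>
      hx' (dotProduct_self_eq_zero.mp h.symm)
  have hdetA : IsUnit (Aᵀ * A).det := hAtA.det_pos.ne'.isUnit
  have hInv2 : (Aᵀ * A)⁻¹ * (Aᵀ * A) = 1 := nonsing_inv_mul _ hdetA
  have hFA : F * A = 0 := by
    show (1 - A * (Aᵀ * A)⁻¹ * Aᵀ) * A = 0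
    rw [Matrix.sub_mul, Matrix.one_mul, Matrix.mul_assoc (A * (Aᵀ * A)⁻¹) Aᵀ A,
      Matrix.mul_assoc A, hInv2, Matrix.mul_one, sub_self]
  have hFT : Fᵀ = F := by
    show (1 - A * (Aᵀ * A)⁻¹ * Aᵀ)ᵀ = F
    rw [transpose_sub, transpose_one, transpose_mul, transpose_mul, transpose_transpose,
      transpose_nonsing_inv, transpose_mul, transpose_transpose]
    show 1 - Aᵀᵀ * ((Aᵀ * A)⁻¹ * Aᵀ) = F
    rw [transpose_transpose, ← Matrix.mul_assoc]
  have hFF : F * F = F := by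
    have h1 : F * F = F - (F * A) * ((Aᵀ * A)⁻¹ * Aᵀ) := by
      show F * (1 - A * (Aᵀ * A)⁻¹ * Aᵀ) = _
      rw [Matrix.mul_sub, Matrix.mul_one, Matrix.mul_assoc A, ← Matrix.mul_assoc F A]
    rw [h1, hFA, Matrix.zero_mul, sub_zero]
  -- M := 1 + Gt Gtᵀ is positive definite, hence invertible
  set M : Matrix (Fin L) (Fin L) ℝ := 1 + Gt * Gtᵀ with hMdef
  have hMpos : M.PosDef := by
    have hps := posSemidef_self_mul_conjTranspose Gt
    rw [conjTranspose_eq_transpose_of_trivial] at hps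
    exact Matrix.PosDef.one.add_posSemidef hps
  have hdetM : IsUnit M.det := hMpos.det_pos.ne'.isUnit
  have hM1 : M * M⁻¹ = 1 := mul_nonsing_inv _ hdetM
  -- key vectors
  set c : Fin L → ℝ := F *ᵥ a with hc
  set u : Fin L → ℝ := M⁻¹ *ᵥ c with hu
  set bs : Fin N → ℝ := Gtᵀ *ᵥ u with hbs
  have hGtbs : Gt *ᵥ bs = c - u := by
    rw [hbs, mulVec_mulVec]
    have h6 : Gt * Gtᵀ = M - 1 := by rw [hMdef, add_sub_cancel_left]
    rw [h6, sub_mulVec, hu, mulVec_mulVec, hM1, one_mulVec, one_mulVec]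
  -- value of the target
  have htarget : a ⬝ᵥ Qk *ᵥ a = c ⬝ᵥ u := by
    show a ⬝ᵥ (Fᵀ * M⁻¹ * F) *ᵥ a = c ⬝ᵥ u
    rw [Matrix.mul_assoc, ← mulVec_mulVec, dotProduct_mulVec, vecMul_transpose, ← mulVec_mulVec]
  -- the constant identity: bs⬝bs + u⬝u = c⬝u
  have hconst : bs ⬝ᵥ bs + u ⬝ᵥ u = c ⬝ᵥ u := by
    have h1 : bs ⬝ᵥ bs = u ⬝ᵥ (c - u) := by
      conv_lhs => rw [hbs, dotmv, transpose_transpose, ← hbs, hGtbs]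
    rw [h1, dotProduct_sub, dotProduct_comm u c]
    ring
  constructor
  · -- membership: take b = bs, β = (AᵀA)⁻¹ Aᵀ (a - G bs)
    refine ⟨bs, (Aᵀ * A)⁻¹ *ᵥ (Aᵀ *ᵥ (a - G *ᵥ bs)), ?_⟩
    have h2 : A *ᵥ ((Aᵀ * A)⁻¹ *ᵥ (Aᵀ *ᵥ (a - G *ᵥ bs)))
        = (a - G *ᵥ bs) - F *ᵥ (a - G *ᵥ bs) := by
      rw [mulVec_mulVec, mulVec_mulVec]
      have h5 : A * (Aᵀ * A)⁻¹ * Aᵀ = 1 - F := by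
        show _ = 1 - (1 - A * (Aᵀ * A)⁻¹ * Aᵀ)
        rw [sub_sub_cancel]
      rw [h5, sub_mulVec, one_mulVec]
    have h3 : F *ᵥ (a - G *ᵥ bs) = c - Gt *ᵥ bs := by
      rw [mulVec_sub, mulVec_mulVec]
    have hres : ∀ i, G.mulVec bs i + A.mulVec ((Aᵀ * A)⁻¹ *ᵥ (Aᵀ *ᵥ (a - G *ᵥ bs))) i - a i
        = -u i := by
      intro i
      have h7 := congrFun h2 i
      have h8 := congrFun h3 i
      have h9 := congrFun hGtbs i
      simp only [Pi.sub_apply, Pi.neg_apply] at h7 h8 h9 ⊢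
      linarith
    have hsum2 : ∑ i, (G.mulVec bs i + A.mulVec ((Aᵀ * A)⁻¹ *ᵥ (Aᵀ *ᵥ (a - G *ᵥ bs))) i - a i) ^ 2
        = u ⬝ᵥ u := by
      rw [Finset.sum_congr rfl (fun i _ => by rw [hres i])]
      simp [dotProduct, sq]
    show a ⬝ᵥ Qk *ᵥ a = _
    rw [htarget, ← hconst, hsum2, sumsq]
  · -- lower bound
    rintro y ⟨b, β, rfl⟩
    set v : Fin L → ℝ := G *ᵥ b + A *ᵥ β - a with hv
    set w : Fin L → ℝ := v - F *ᵥ v with hw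
    have hFw : F *ᵥ w = 0 := by
      rw [hw, mulVec_sub, mulVec_mulVec, hFF, sub_self]
    have hcross : (F *ᵥ v) ⬝ᵥ w = 0 := by
      rw [dotmv, hFT, hFw, dotProduct_zero]
    have hsplit : v ⬝ᵥ v = (F *ᵥ v) ⬝ᵥ (F *ᵥ v) + w ⬝ᵥ w := by
      have hvsum : v = F *ᵥ v + w := by rw [hw]; ring
      calc v ⬝ᵥ v = (F *ᵥ v + w) ⬝ᵥ (F *ᵥ v + w) := by rw [← hvsum]
        _ = (F *ᵥ v) ⬝ᵥ (F *ᵥ v) + (F *ᵥ v) ⬝ᵥ w + ((F *ᵥ v) ⬝ᵥ w + w ⬝ᵥ w) := by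
            rw [dotProduct_add, add_dotProduct, add_dotProduct, dotProduct_comm w (F *ᵥ v)]
        _ = (F *ᵥ v) ⬝ᵥ (F *ᵥ v) + w ⬝ᵥ w := by rw [hcross]; ring
    have hFv : F *ᵥ v = Gt *ᵥ b - c := by
      rw [hv, mulVec_sub, mulVec_add, mulVec_mulVec, mulVec_mulVec, hFA, zero_mulVec, add_zero]
    -- quadratic expansion around bs
    set d : Fin N → ℝ := b - bs with hd
    have hbd : b = d + bs := by rw [hd]; ring
    have hGb : Gt *ᵥ b - c = Gt *ᵥ d - u := by
      rw [hbd, mulVec_add, hGtbs]; ring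
    have hdu : (Gt *ᵥ d) ⬝ᵥ u = d ⬝ᵥ bs := by rw [dotmv, ← hbs]
    have e1 : b ⬝ᵥ b = d ⬝ᵥ d + 2 * (d ⬝ᵥ bs) + bs ⬝ᵥ bs := by
      rw [hbd, dotProduct_add, add_dotProduct, add_dotProduct, dotProduct_comm bs d]
      ring
    have e3 : (Gt *ᵥ d - u) ⬝ᵥ (Gt *ᵥ d - u)
        = (Gt *ᵥ d) ⬝ᵥ (Gt *ᵥ d) - 2 * (d ⬝ᵥ bs) + u ⬝ᵥ u := by
      rw [dotProduct_sub, sub_dotProduct, sub_dotProduct, hdu,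
        dotProduct_comm u (Gt *ᵥ d), hdu]
      ring
    have hquad : b ⬝ᵥ b + (Gt *ᵥ b - c) ⬝ᵥ (Gt *ᵥ b - c)
        = d ⬝ᵥ d + (Gt *ᵥ d) ⬝ᵥ (Gt *ᵥ d) + c ⬝ᵥ u := by
      rw [hGb, e1, e3, ← hconst]; ring
    have h5 : v ⬝ᵥ v = (Gt *ᵥ b - c) ⬝ᵥ (Gt *ᵥ b - c) + w ⬝ᵥ w := by rw [hsplit, hFv]
    have hy1 : ∑ i, b i ^ 2 = b ⬝ᵥ b := sumsq b
    have hy2 : ∑ i, (G.mulVec b i + A.mulVec β i - a i) ^ 2 = v ⬝ᵥ v := sumsq v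
    show a ⬝ᵥ Qk *ᵥ a ≤ _
    rw [htarget, hy1, hy2]
    have n1 := dot_self_nonneg' d
    have n2 := dot_self_nonneg' (Gt *ᵥ d)
    have n3 := dot_self_nonneg' w
    linarith
end
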